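/- Taylor data and genericity of the profile W̄ at the origin: Let W̄ : ℝ³ → ℝ be defined by W̄(y) = B(y̌)^{−1/2} W₁d( B(y̌)^{3/2} y₁ ), where y̌ = (y₂,y₃) and B(y̌) = 1/(1 + y₂² + y₃²). Then W̄(0) = 0; ∂₁W̄(0) = −1 and ∂₂W̄(0) = ∂₃W̄(0) = 0; every second-order partial derivative of W̄ vanishes at 0; among the third-order partial derivatives at 0, ∂₁³W̄(0) = 6, ∂₁∂₂²W̄(0) = 2, ∂₁∂₃²W̄(0) = 2, and all other third-order partial derivatives of W̄ vanish at 0. In particular the Hessian matrix of ∂₁W̄ at the origin equals diag(6,2,2) and is positive definite (the genericity condition). -/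

import Mathlib

open ContinuousLinearMap

noncomputable section

abbrev V3 : Type := Fin 3 → ℝ

def pdS (j : Fin 3) (g : V3 → ℝ) (x : V3) : ℝ :=
  fderiv ℝ g x (Pi.single j 1 : V3)

def W1d (y : ℝ) : ℝ :=
  (-y / 2 + Real.sqrt (1 / 27 + y ^ 2 / 4)) ^ ((1 : ℝ) / 3)
    - (y / 2 + Real.sqrt (1 / 27 + y ^ 2 / 4)) ^ ((1 : ℝ) / 3)

def Bf (y : V3) : ℝ := 1 / (1 + y 1 ^ 2 + y 2 ^ 2)

def Wbar (y : V3) : ℝ :=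
  Bf y ^ (-(1 : ℝ) / 2) * W1d (Bf y ^ ((3 : ℝ) / 2) * y 0)

-- positivity of the inner arguments
lemma sqrt_arg_pos (t : ℝ) : 0 < 1 / 27 + t ^ 2 / 4 := by positivity

lemma inner1_pos (t : ℝ) : 0 < -t / 2 + Real.sqrt (1 / 27 + t ^ 2 / 4) := by
  have h1 : 0 ≤ 1 / 27 + t ^ 2 / 4 := (sqrt_arg_pos t).le
  have h2 : Real.sqrt (t ^ 2 / 4) < Real.sqrt (1 / 27 + t ^ 2 / 4) := by
    apply Real.sqrt_lt_sqrt (by positivity); linarith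
  have h3 : Real.sqrt (t ^ 2 / 4) = |t| / 2 := by
    rw [show t ^ 2 / 4 = (|t| / 2) ^ 2 by rw [div_pow, sq_abs]; norm_num,
      Real.sqrt_sq (by positivity)]
  have := abs_nonneg t
  cases abs_cases t with
  | inl h => nlinarith
  | inr h => nlinarith

lemma inner2_pos (t : ℝ) : 0 < t / 2 + Real.sqrt (1 / 27 + t ^ 2 / 4) := by
  have := inner1_pos (-t)
  simpa [neg_neg, neg_div] using this

lemma W1d_cubic (t : ℝ) : W1d t ^ 3 + W1d t + t = 0 := by
  set s := Real.sqrt (1 / 27 + t ^ 2 / 4) with hs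
  have hsq : s ^ 2 = 1 / 27 + t ^ 2 / 4 := Real.sq_sqrt (sqrt_arg_pos t).le
  have h1 : (0:ℝ) < -t / 2 + s := inner1_pos t
  have h2 : (0:ℝ) < t / 2 + s := inner2_pos t
  set A := (-t / 2 + s) ^ ((1:ℝ)/3) with hA
  set B := (t / 2 + s) ^ ((1:ℝ)/3) with hB
  have hA3 : A ^ 3 = -t / 2 + s := by
    rw [hA, ← Real.rpow_natCast ((-t / 2 + s) ^ ((1:ℝ)/3)) 3, ← Real.rpow_mul h1.le]
    norm_num
  have hB3 : B ^ 3 = t / 2 + s := by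
    rw [hB, ← Real.rpow_natCast ((t / 2 + s) ^ ((1:ℝ)/3)) 3, ← Real.rpow_mul h2.le]
    norm_num
  have hAB : A * B = 1 / 3 := by
    rw [hA, hB, ← Real.mul_rpow h1.le h2.le]
    have : (-t / 2 + s) * (t / 2 + s) = 1 / 27 := by nlinarith [hsq]
    rw [this, show (1/27 : ℝ) = (1/3 : ℝ) ^ (3:ℕ) by norm_num,
      ← Real.rpow_natCast (1/3 : ℝ) 3, ← Real.rpow_mul (by norm_num)]
    norm_num
  have hW : W1d t = A - B := rfl
  rw [hW]
  linear_combination hA3 - hB3 - 3 * (A - B) * hAB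

lemma Sf_pos (y : V3) : 0 < 1 + y 1 ^ 2 + y 2 ^ 2 := by positivity

lemma Bf_pos (y : V3) : 0 < Bf y := by
  unfold Bf; positivity

lemma Wbar_cubic (y : V3) :
    Wbar y ^ 3 + (1 + y 1 ^ 2 + y 2 ^ 2) * Wbar y + y 0 = 0 := by
  set b := Bf y with hb
  have hbp : 0 < b := Bf_pos y
  set t := b ^ ((3:ℝ)/2) * y 0 with ht
  set u := W1d t with hu
  have hc : u ^ 3 + u + t = 0 := W1d_cubic t
  set P := b ^ (-(1:ℝ)/2) with hP
  set Q := b ^ ((3:ℝ)/2) with hQ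
  have hP2 : P ^ 2 = (1 + y 1 ^ 2 + y 2 ^ 2) := by
    rw [hP, ← Real.rpow_natCast (b ^ (-(1:ℝ)/2)) 2, ← Real.rpow_mul hbp.le]
    norm_num
    rw [Real.rpow_neg_one, hb]
    unfold Bf
    rw [one_div, inv_inv]
  have hPQ : P ^ 3 * Q = 1 := by
    rw [hP, hQ, ← Real.rpow_natCast (b ^ (-(1:ℝ)/2)) 3, ← Real.rpow_mul hbp.le,
      ← Real.rpow_add hbp]
    norm_num
  have hW : Wbar y = P * u := rfl
  rw [hW]
  linear_combination P ^ 3 * hc - u * P * hP2 - y 0 * hPQ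


lemma Wbar_zero : Wbar 0 = 0 := by
  have h := Wbar_cubic 0
  simp only [Pi.zero_apply] at h
  nlinarith [sq_nonneg (Wbar 0), sq_nonneg (Wbar 0 + 1)]

lemma W1d_diff (t : ℝ) : DifferentiableAt ℝ W1d t := by
  have hs : DifferentiableAt ℝ (fun t : ℝ => Real.sqrt (1 / 27 + t ^ 2 / 4)) t := by
    apply DifferentiableAt.sqrt (by fun_prop) (by positivity)
  unfold W1d
  apply DifferentiableAt.sub
  · exact (DifferentiableAt.add (by fun_prop) hs).rpow_const (Or.inl (inner1_pos t).ne')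
  · exact (DifferentiableAt.add (by fun_prop) hs).rpow_const (Or.inl (inner2_pos t).ne')

lemma coord_diff (i : Fin 3) (x : V3) : DifferentiableAt ℝ (fun y : V3 => y i) x :=
  (ContinuousLinearMap.proj i : V3 →L[ℝ] ℝ).differentiableAt

lemma Bf_diff (x : V3) : DifferentiableAt ℝ Bf x := by
  unfold Bf
  have hd : DifferentiableAt ℝ (fun y : V3 => 1 + y 1 ^ 2 + y 2 ^ 2) x :=
    DifferentiableAt.add (DifferentiableAt.add (by fun_prop) ((coord_diff 1 x).pow 2)) ((coord_diff 2 x).pow 2)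
  simp only [one_div]
  exact hd.inv (by positivity)

lemma Wbar_diff (x : V3) : DifferentiableAt ℝ Wbar x := by
  unfold Wbar
  have h1 : DifferentiableAt ℝ (fun y => Bf y ^ (-(1:ℝ)/2)) x :=
    (Bf_diff x).rpow_const (Or.inl (Bf_pos x).ne')
  have h2 : DifferentiableAt ℝ (fun y => Bf y ^ ((3:ℝ)/2) * y 0) x :=
    ((Bf_diff x).rpow_const (Or.inl (Bf_pos x).ne')).mul (coord_diff 0 x)
  exact h1.mul ((W1d_diff _).comp x h2)


def qf (x : V3) : ℝ := 3 * Wbar x ^ 2 + (1 + x 1 ^ 2 + x 2 ^ 2)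

lemma qf_pos (x : V3) : 0 < qf x := by unfold qf; positivity

def pr (i : Fin 3) : V3 →L[ℝ] ℝ := ContinuousLinearMap.proj i

lemma pr_apply (i : Fin 3) (v : V3) : pr i v = v i := rfl

lemma hasFDerivAt_coord (i : Fin 3) (x : V3) :
    HasFDerivAt (fun y : V3 => y i) (pr i) x := (pr i).hasFDerivAt

def Lx (x : V3) : V3 →L[ℝ] ℝ :=
  -((qf x)⁻¹ • (pr 0 + (2 * x 1 * Wbar x) • pr 1 + (2 * x 2 * Wbar x) • pr 2))

lemma hasFDerivAt_Wbar (x : V3) : HasFDerivAt Wbar (Lx x) x := by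
  have hW' : HasFDerivAt Wbar (fderiv ℝ Wbar x) x := (Wbar_diff x).hasFDerivAt
  set f' := fderiv ℝ Wbar x with hf'
  have hS : HasFDerivAt (fun y : V3 => 1 + y 1 ^ 2 + y 2 ^ 2)
      ((2 * x 1) • pr 1 + (2 * x 2) • pr 2) x := by
    have h := ((((hasFDerivAt_coord 1 x).mul (hasFDerivAt_coord 1 x)).const_add (1:ℝ)).add
      ((hasFDerivAt_coord 2 x).mul (hasFDerivAt_coord 2 x)))
    convert h using 1
    iterate 5 rfl
    · funext y; simp only [Pi.add_apply, Pi.mul_apply]; ring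
    · ext v; simp [pr_apply]; ring
  have hP : HasFDerivAt
      (fun y : V3 => Wbar y ^ 3 + (1 + y 1 ^ 2 + y 2 ^ 2) * Wbar y + y 0)
      ((3 * Wbar x ^ 2) • f' +
        ((1 + x 1 ^ 2 + x 2 ^ 2) • f' +
          Wbar x • ((2 * x 1) • pr 1 + (2 * x 2) • pr 2)) + pr 0) x := by
    have h := (((hW'.mul hW').mul hW').add (hS.mul hW')).add (hasFDerivAt_coord 0 x)
    convert h using 1
    iterate 5 rfl
    · funext y; simp only [Pi.add_apply, Pi.mul_apply]; ring
    · ext v; simp [pr_apply]; ring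
  have hfun : (fun y : V3 => Wbar y ^ 3 + (1 + y 1 ^ 2 + y 2 ^ 2) * Wbar y + y 0)
      = fun _ => (0:ℝ) := funext Wbar_cubic
  rw [hfun] at hP
  have h0 := hP.unique (hasFDerivAt_const (0:ℝ) x)
  have hfeq : f' = Lx x := by
    ext v
    have h0v := ContinuousLinearMap.ext_iff.mp h0 v
    have hq := (qf_pos x).ne'
    simp only [ContinuousLinearMap.add_apply, ContinuousLinearMap.smul_apply,
      ContinuousLinearMap.zero_apply, ContinuousLinearMap.neg_apply, Lx, pr_apply,
      smul_eq_mul] at h0v ⊢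
    rw [qf] at hq ⊢
    field_simp
    linear_combination h0v
  rw [← hfeq]; exact hW'

def Gf (k : Fin 3) (x : V3) : ℝ :=
  -((if k = 0 then 1 else 2 * x k * Wbar x) * (qf x)⁻¹)

lemma Lx_apply (x : V3) (k : Fin 3) : Lx x (Pi.single k 1) = Gf k x := by
  fin_cases k <;>
    simp [Lx, Gf, pr_apply, Pi.single_apply, Fin.ext_iff] <;> ring

lemma pdS_Wbar (k : Fin 3) : pdS k Wbar = Gf k := by
  funext x
  rw [pdS, (hasFDerivAt_Wbar x).fderiv, Lx_apply]

lemma qf_zero : qf 0 = 1 := by simp [qf, Wbar_zero]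

lemma Gf_zero (k : Fin 3) : Gf k 0 = if k = 0 then -1 else 0 := by
  fin_cases k <;> simp [Gf, qf_zero, Wbar_zero]

def Dqf (x : V3) : V3 →L[ℝ] ℝ :=
  (6 * Wbar x) • Lx x + (2 * x 1) • pr 1 + (2 * x 2) • pr 2

lemma hasFDerivAt_qf (x : V3) : HasFDerivAt qf (Dqf x) x := by
  have hW' := hasFDerivAt_Wbar x
  have h := ((hW'.mul hW').const_mul 3).add
    ((((hasFDerivAt_coord 1 x).mul (hasFDerivAt_coord 1 x)).const_add 1).add
      ((hasFDerivAt_coord 2 x).mul (hasFDerivAt_coord 2 x)))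
  convert h using 1
  iterate 5 rfl
  · funext y; simp [qf]; ring
  · ext v; simp [Dqf, pr_apply]; ring

lemma hasFDerivAt_invqf (x : V3) :
    HasFDerivAt (fun y => (qf y)⁻¹) ((-(qf x ^ 2)⁻¹) • Dqf x) x :=
  (hasDerivAt_inv (qf_pos x).ne').comp_hasFDerivAt x (hasFDerivAt_qf x)

def Mf (k : Fin 3) (x : V3) : V3 →L[ℝ] ℝ :=
  if k = 0 then (qf x ^ 2)⁻¹ • Dqf x
  else -((qf x)⁻¹ • ((2 * Wbar x) • pr k + (2 * x k) • Lx x)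
      - (2 * x k * Wbar x * (qf x ^ 2)⁻¹) • Dqf x)

lemma hasFDerivAt_Gf (k : Fin 3) (x : V3) : HasFDerivAt (Gf k) (Mf k x) x := by
  have hinv := hasFDerivAt_invqf x
  fin_cases k
  · have h := hinv.neg
    convert h using 1
    iterate 5 rfl
    · funext y; simp [Gf]
    · ext v; simp [Mf]
  · have h := ((((hasFDerivAt_coord 1 x).const_mul 2).mul (hasFDerivAt_Wbar x)).mul hinv).neg
    show HasFDerivAt (Gf 1) (Mf 1 x) x
    rw [show Gf 1 = (fun y => -(2 * y 1 * Wbar y * (qf y)⁻¹)) from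
        funext fun y => by simp [Gf, Fin.ext_iff],
      show Mf 1 x = -((2 * x 1 * Wbar x) • (-(qf x ^ 2)⁻¹ • Dqf x)
          + (qf x)⁻¹ • ((2 * x 1) • Lx x + Wbar x • (2:ℝ) • pr 1)) from by
        ext v; simp [Mf, pr_apply, Fin.ext_iff]; try ring]
    exact h
  · have h := ((((hasFDerivAt_coord 2 x).const_mul 2).mul (hasFDerivAt_Wbar x)).mul hinv).neg
    show HasFDerivAt (Gf 2) (Mf 2 x) x
    rw [show Gf 2 = (fun y => -(2 * y 2 * Wbar y * (qf y)⁻¹)) from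
        funext fun y => by simp [Gf, Fin.ext_iff],
      show Mf 2 x = -((2 * x 2 * Wbar x) • (-(qf x ^ 2)⁻¹ • Dqf x)
          + (qf x)⁻¹ • ((2 * x 2) • Lx x + Wbar x • (2:ℝ) • pr 2)) from by
        ext v; simp [Mf, pr_apply, Fin.ext_iff]; try ring]
    exact h

def iqf (y : V3) : ℝ := (qf y)⁻¹

lemma iqf_zero : iqf 0 = 1 := by simp [iqf, qf_zero]

def dq (j : Fin 3) (x : V3) : ℝ :=
  6 * Wbar x * Gf j x + (if j = 0 then 0 else 2 * x j)

def Hf (k j : Fin 3) (x : V3) : ℝ :=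
  if k = 0 then iqf x * iqf x * dq j x
  else -(iqf x * (2 * Wbar x * (if j = k then 1 else 0) + 2 * x k * Gf j x)
        - 2 * x k * Wbar x * (iqf x * iqf x) * dq j x)

lemma dq_zero (j : Fin 3) : dq j 0 = 0 := by
  simp [dq, Wbar_zero]

lemma Mf_apply (k j : Fin 3) (x : V3) : Mf k x (Pi.single j 1) = Hf k j x := by
  fin_cases k <;> fin_cases j <;>
    simp [Mf, Hf, dq, Dqf, Lx_apply, iqf, pr_apply, Pi.single_apply, Fin.ext_iff,
      Gf_zero, sq, mul_inv] <;> ring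

lemma pdS_Gf (k j : Fin 3) : pdS j (Gf k) = Hf k j := by
  funext x
  rw [pdS, (hasFDerivAt_Gf k x).fderiv, Mf_apply]

lemma Hf_zero (k j : Fin 3) : Hf k j 0 = 0 := by
  fin_cases k <;> fin_cases j <;>
    simp [Hf, dq_zero, Wbar_zero, iqf_zero, Gf_zero, Fin.ext_iff]

lemma Lx_zero : Lx 0 = -pr 0 := by
  ext v
  simp [Lx, qf_zero, Wbar_zero, pr_apply]

lemma Dqf_zero : Dqf 0 = 0 := by
  ext v
  simp [Dqf, Wbar_zero, pr_apply]

lemma Mf_zero (k : Fin 3) : Mf k 0 = 0 := by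
  unfold Mf
  split <;> simp [Dqf_zero, Wbar_zero]

lemma hiq0 : HasFDerivAt iqf (0 : V3 →L[ℝ] ℝ) 0 := by
  have := hasFDerivAt_invqf 0
  rw [Dqf_zero, smul_zero] at this
  exact this

lemma hG0 (j : Fin 3) : HasFDerivAt (Gf j) (0 : V3 →L[ℝ] ℝ) 0 := by
  have := hasFDerivAt_Gf j 0
  rwa [Mf_zero] at this

lemma hdq (j : Fin 3) :
    HasFDerivAt (dq j) (if j = 0 then (6:ℝ) • pr 0 else (2:ℝ) • pr j) 0 := by
  have hw := hasFDerivAt_Wbar 0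
  fin_cases j
  · show HasFDerivAt (dq 0) ((6:ℝ) • pr 0) 0
    rw [show dq 0 = fun x => (6 * Wbar x) * Gf 0 x from funext fun x => by simp [dq]; try ring]
    have h := (hw.const_mul 6).mul (hG0 0)
    rw [show ((6:ℝ) • pr 0 : V3 →L[ℝ] ℝ)
        = (6 * Wbar 0) • (0 : V3 →L[ℝ] ℝ) + Gf 0 0 • ((6:ℝ) • Lx 0) from by
      ext v; simp [Wbar_zero, Gf_zero, Lx_zero, pr_apply]; try ring]
    exact h
  · show HasFDerivAt (dq 1) ((2:ℝ) • pr 1) 0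
    rw [show dq 1 = fun x => (6 * Wbar x) * Gf 1 x + 2 * x 1 from funext fun x => by
      simp [dq, Fin.ext_iff]; try ring]
    have h := ((hw.const_mul 6).mul (hG0 1)).add ((hasFDerivAt_coord 1 0).const_mul 2)
    rw [show ((2:ℝ) • pr 1 : V3 →L[ℝ] ℝ)
        = ((6 * Wbar 0) • (0 : V3 →L[ℝ] ℝ) + Gf 1 0 • ((6:ℝ) • Lx 0)) + (2:ℝ) • pr 1 from by
      ext v; simp [Wbar_zero, Gf_zero, Lx_zero, pr_apply]]
    exact h
  · show HasFDerivAt (dq 2) ((2:ℝ) • pr 2) 0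
    rw [show dq 2 = fun x => (6 * Wbar x) * Gf 2 x + 2 * x 2 from funext fun x => by
      simp [dq, Fin.ext_iff]; try ring]
    have h := ((hw.const_mul 6).mul (hG0 2)).add ((hasFDerivAt_coord 2 0).const_mul 2)
    rw [show ((2:ℝ) • pr 2 : V3 →L[ℝ] ℝ)
        = ((6 * Wbar 0) • (0 : V3 →L[ℝ] ℝ) + Gf 2 0 • ((6:ℝ) • Lx 0)) + (2:ℝ) • pr 2 from by
      ext v; simp [Wbar_zero, Gf_zero, Lx_zero, pr_apply]]
    exact h

def Nf (k j : Fin 3) : V3 →L[ℝ] ℝ :=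
  if k = 0 then (if j = 0 then (6:ℝ) • pr 0 else (2:ℝ) • pr j)
  else ((if j = k then (2:ℝ) • pr 0 else 0) + (if j = 0 then (2:ℝ) • pr k else 0))

set_option maxHeartbeats 2000000 in
lemma hasFDerivAt_Hf (k j : Fin 3) : HasFDerivAt (Hf k j) (Nf k j) 0 := by
  have hw := hasFDerivAt_Wbar 0
  have hdqj := hdq j
  have hGj := hG0 j
  fin_cases k
  · -- k = 0
    show HasFDerivAt (Hf 0 j) (Nf 0 j) 0
    rw [show Hf 0 j = fun x => iqf x * iqf x * dq j x from funext fun x => by simp [Hf]]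
    have h := (hiq0.mul hiq0).mul hdqj
    rw [show Nf 0 j = (iqf 0 * iqf 0) • (if j = 0 then (6:ℝ) • pr 0 else (2:ℝ) • pr j)
        + dq j 0 • (iqf 0 • (0 : V3 →L[ℝ] ℝ) + iqf 0 • (0 : V3 →L[ℝ] ℝ)) from by
      simp [Nf, iqf_zero, dq_zero]]
    exact h
  · -- k = 1
    show HasFDerivAt (Hf 1 j) (Nf 1 j) 0
    rw [show Hf 1 j = fun x =>
        -(iqf x * ((2 * Wbar x) * (if j = 1 then (1:ℝ) else 0) + (2 * x 1) * Gf j x)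
          - ((2 * x 1) * Wbar x) * (iqf x * iqf x) * dq j x) from
      funext fun x => by simp [Hf, Fin.ext_iff]; try ring]
    have h := ((hiq0.mul
        (((hw.const_mul 2).mul_const (if j = 1 then (1:ℝ) else 0)).add
          (((hasFDerivAt_coord 1 0).const_mul 2).mul hGj))).sub
      (((((hasFDerivAt_coord 1 0).const_mul 2).mul hw).mul (hiq0.mul hiq0)).mul hdqj)).neg
    rw [show Nf 1 j =
      -((iqf 0 • ((if j = 1 then (1:ℝ) else 0) • ((2:ℝ) • Lx 0)
            + ((2 * (0:V3) 1) • (0 : V3 →L[ℝ] ℝ) + Gf j 0 • ((2:ℝ) • pr 1)))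
          + ((2 * Wbar 0) * (if j = 1 then (1:ℝ) else 0)
              + (2 * (0:V3) 1) * Gf j 0) • (0 : V3 →L[ℝ] ℝ))
        - ((((2 * (0:V3) 1) * Wbar 0) * (iqf 0 * iqf 0))
              • (if j = 0 then (6:ℝ) • pr 0 else (2:ℝ) • pr j)
            + dq j 0 • (((2 * (0:V3) 1) * Wbar 0)
                  • (iqf 0 • (0 : V3 →L[ℝ] ℝ) + iqf 0 • (0 : V3 →L[ℝ] ℝ))
                + (iqf 0 * iqf 0) • ((2 * (0:V3) 1) • Lx 0 + Wbar 0 • ((2:ℝ) • pr 1))))) from by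
      ext v
      by_cases hj0 : j = 0 <;> by_cases hj1 : j = 1 <;>
        simp [Nf, hj0, hj1, iqf_zero, dq_zero, Wbar_zero, Gf_zero, Lx_zero, pr_apply] <;>
        try ring]
    exact h
  · -- k = 2
    show HasFDerivAt (Hf 2 j) (Nf 2 j) 0
    rw [show Hf 2 j = fun x =>
        -(iqf x * ((2 * Wbar x) * (if j = 2 then (1:ℝ) else 0) + (2 * x 2) * Gf j x)
          - ((2 * x 2) * Wbar x) * (iqf x * iqf x) * dq j x) from
      funext fun x => by simp [Hf, Fin.ext_iff]; try ring]
    have h := ((hiq0.mul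
        (((hw.const_mul 2).mul_const (if j = 2 then (1:ℝ) else 0)).add
          (((hasFDerivAt_coord 2 0).const_mul 2).mul hGj))).sub
      (((((hasFDerivAt_coord 2 0).const_mul 2).mul hw).mul (hiq0.mul hiq0)).mul hdqj)).neg
    rw [show Nf 2 j =
      -((iqf 0 • ((if j = 2 then (1:ℝ) else 0) • ((2:ℝ) • Lx 0)
            + ((2 * (0:V3) 2) • (0 : V3 →L[ℝ] ℝ) + Gf j 0 • ((2:ℝ) • pr 2)))
          + ((2 * Wbar 0) * (if j = 2 then (1:ℝ) else 0)
              + (2 * (0:V3) 2) * Gf j 0) • (0 : V3 →L[ℝ] ℝ))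
        - ((((2 * (0:V3) 2) * Wbar 0) * (iqf 0 * iqf 0))
              • (if j = 0 then (6:ℝ) • pr 0 else (2:ℝ) • pr j)
            + dq j 0 • (((2 * (0:V3) 2) * Wbar 0)
                  • (iqf 0 • (0 : V3 →L[ℝ] ℝ) + iqf 0 • (0 : V3 →L[ℝ] ℝ))
                + (iqf 0 * iqf 0) • ((2 * (0:V3) 2) • Lx 0 + Wbar 0 • ((2:ℝ) • pr 2))))) from by
      ext v
      by_cases hj0 : j = 0 <;> by_cases hj2 : j = 2 <;>
        simp [Nf, hj0, hj2, iqf_zero, dq_zero, Wbar_zero, Gf_zero, Lx_zero, pr_apply] <;>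
        try ring]
    exact h

lemma pdS_third (i j k : Fin 3) :
    pdS i (pdS j (pdS k Wbar)) 0 = Nf k j (Pi.single i 1) := by
  rw [pdS_Wbar, pdS_Gf, pdS, (hasFDerivAt_Hf k j).fderiv]

/-- Taylor data and genericity of the profile `W̄` at the origin: `W̄(0) = 0`,
`∇W̄(0) = (−1,0,0)`, all second-order partials vanish at `0`, the third-order partials at
`0` are `∂₁³W̄(0) = 6`, `∂₁∂₂²W̄(0) = ∂₁∂₃²W̄(0) = 2` (in any order of differentiation)
with all others vanishing; in particular the Hessian of `∂₁W̄` at `0` is `diag(6,2,2)`,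
which is positive definite (genericity). -/
theorem Wbar_taylor_data_and_genericity :
    Wbar 0 = 0 ∧
    pdS 0 Wbar 0 = -1 ∧ pdS 1 Wbar 0 = 0 ∧ pdS 2 Wbar 0 = 0 ∧
    (∀ j k : Fin 3, pdS j (pdS k Wbar) 0 = 0) ∧
    (∀ i j k : Fin 3,
      pdS i (pdS j (pdS k Wbar)) 0 =
        if ({i, j, k} : Multiset (Fin 3)) = ({0, 0, 0} : Multiset (Fin 3)) then 6
        else if ({i, j, k} : Multiset (Fin 3)) = ({0, 1, 1} : Multiset (Fin 3)) then 2
        else if ({i, j, k} : Multiset (Fin 3)) = ({0, 2, 2} : Multiset (Fin 3)) then 2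
        else 0) ∧
    Matrix.of (fun j k : Fin 3 => pdS j (pdS k (pdS 0 Wbar)) 0) =
      Matrix.diagonal ![6, 2, 2] ∧
    (Matrix.of (fun j k : Fin 3 => pdS j (pdS k (pdS 0 Wbar)) 0)).PosDef := by
  have hmat : Matrix.of (fun j k : Fin 3 => pdS j (pdS k (pdS 0 Wbar)) 0) =
      Matrix.diagonal ![6, 2, 2] := by
    ext j k
    rw [Matrix.of_apply, pdS_third j k 0]
    fin_cases j <;> fin_cases k <;>
      simp [Nf, pr_apply, Pi.single_apply, Matrix.diagonal_apply, Fin.ext_iff] <;>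
      norm_num
  refine ⟨Wbar_zero, ?_, ?_, ?_, ?_, ?_, hmat, ?_⟩
  · rw [show pdS 0 Wbar 0 = Gf 0 0 from congrFun (pdS_Wbar 0) 0, Gf_zero]; norm_num
  · rw [show pdS 1 Wbar 0 = Gf 1 0 from congrFun (pdS_Wbar 1) 0, Gf_zero,
      if_neg (by decide : ¬(1 : Fin 3) = 0)]
  · rw [show pdS 2 Wbar 0 = Gf 2 0 from congrFun (pdS_Wbar 2) 0, Gf_zero,
      if_neg (by decide : ¬(2 : Fin 3) = 0)]
  · intro j k
    rw [show pdS j (pdS k Wbar) 0 = Hf k j 0 from by rw [pdS_Wbar, pdS_Gf], Hf_zero]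
  · intro i j k
    rw [pdS_third]
    fin_cases i <;> fin_cases j <;> fin_cases k <;>
      simp [Nf, pr_apply, Pi.single_apply, Fin.ext_iff] <;>
      (repeat first
        | rw [if_pos (by decide : _)]
        | rw [if_neg (by decide : ¬_)]) <;>
      norm_num <;>
      decide
  · rw [hmat]
    rw [Matrix.posDef_diagonal_iff]
    intro i; fin_cases i <;> norm_num
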